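/- arXiv:2109.10997 — 8 statements merged into one kernel-verified Lean document; each statement's English description precedes it below -/
import Mathlib

section
/- Let p0, p1, p2, p3 be nonnegative reals with p0 + p1 + p2 + p3 = 1, p3 > 0, and p1 + 2*p2 + 3*p3 < 1 (subcriticality). Define f(y) = p0 + p1*y + p2*y^2 + p3*y^3 and D = 4*p0*p3 + (p2+p3)^2. Then the integral over [0,1] of (1-y)/(f(y)-y) with respect to y equals (1/sqrt(D)) * log((2*p0 - p2 - p3 + sqrt(D))/(2*p0 - p2 - p3 - sqrt(D))). -/
private lemma stmt_2_aux (s p3 A B y : ℝ) (hs : s ≠ 0) (hA : A - y ≠ 0) (hB : y - B ≠ 0)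
    (h : p3 * (A - B) = s) :
    1 / s * (1 / (A - y) + 1 / (y - B)) = 1 / (p3 * (A - y) * (y - B)) := by
  have hp3 : p3 ≠ 0 := by rintro rfl; simp at h; exact hs h.symm
  field_simp
  linear_combination h

theorem stmt_2 (p0 p1 p2 p3 : ℝ) (h0 : 0 ≤ p0) (h1 : 0 ≤ p1) (h2 : 0 ≤ p2) (h3 : 0 < p3)
    (hsum : p0 + p1 + p2 + p3 = 1) (hsub : p1 + 2 * p2 + 3 * p3 < 1)
    (D : ℝ) (hD : D = 4 * p0 * p3 + (p2 + p3) ^ 2) :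
    ∫ y in (0:ℝ)..1, (1 - y) / ((p0 + p1 * y + p2 * y ^ 2 + p3 * y ^ 3) - y)
      = (1 / Real.sqrt D) *
        Real.log ((2 * p0 - p2 - p3 + Real.sqrt D) / (2 * p0 - p2 - p3 - Real.sqrt D)) := by
  set s := Real.sqrt D with hs_def
  have hq1 : 0 < p0 - p2 - 2 * p3 := by linarith
  have hp0 : 0 < p0 := by linarith
  have hDpos : 0 < D := by nlinarith
  have hs : 0 < s := Real.sqrt_pos.mpr hDpos
  have hs2 : s ^ 2 = 4 * p0 * p3 + (p2 + p3) ^ 2 := by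
    rw [hs_def, Real.sq_sqrt hDpos.le, hD]
  set a : ℝ := (s - (p2 + p3)) / (2 * p3) with ha_def
  set b : ℝ := -((p2 + p3) + s) / (2 * p3) with hb_def
  have h3' : (2 : ℝ) * p3 ≠ 0 := by positivity
  have ha1 : 1 < a := by
    rw [ha_def, lt_div_iff₀ (by positivity)]
    nlinarith [hs.le]
  have hb0 : b < 0 := by
    rw [hb_def, div_neg_iff]
    right
    constructor <;> nlinarith
  have hkey : ∀ y : ℝ, p3 * (a - y) * (y - b) = p0 - (p2 + p3) * y - p3 * y ^ 2 := by
    intro y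
    rw [ha_def, hb_def]
    field_simp
    linear_combination hs2
  have hsab : p3 * (a - b) = s := by
    rw [ha_def, hb_def]; field_simp; ring
  -- step 1: a.e. rewrite of the integrand via partial fractions
  have hcongr : (∫ y in (0:ℝ)..1, (1 - y) / ((p0 + p1 * y + p2 * y ^ 2 + p3 * y ^ 3) - y))
      = ∫ y in (0:ℝ)..1, (1 / s) * (1 / (a - y) + 1 / (y - b)) := by
    apply intervalIntegral.integral_congr_ae
    have hne : ∀ᵐ x : ℝ, x ≠ 1 := by
      rw [MeasureTheory.ae_iff]
      simp only [not_not]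
      exact Real.volume_singleton
    filter_upwards [hne] with y hy1 hy
    rw [Set.uIoc_of_le (by norm_num)] at hy
    obtain ⟨hy0, hy1'⟩ := hy
    have hylt : y < 1 := lt_of_le_of_ne hy1' hy1
    have hay : 0 < a - y := by linarith
    have hyb : 0 < y - b := by linarith
    have hfact : (p0 + p1 * y + p2 * y ^ 2 + p3 * y ^ 3) - y
        = (1 - y) * (p3 * (a - y) * (y - b)) := by
      rw [hkey y]; have hp1 : p1 = 1 - p0 - p2 - p3 := by linarith
      rw [hp1]; ring
    have h1y : (1 : ℝ) - y ≠ 0 := by linarith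
    have e : 1 / s * (1 / (a - y) + 1 / (y - b)) = 1 / (p3 * (a - y) * (y - b)) :=
      stmt_2_aux s p3 a b y hs.ne' hay.ne' hyb.ne' hsab
    rw [hfact, e, div_mul_cancel_left₀ h1y, one_div]
  rw [hcongr]
  have hia : IntervalIntegrable (fun y : ℝ => 1 / (a - y)) MeasureTheory.volume 0 1 := by
    apply ContinuousOn.intervalIntegrable
    apply ContinuousOn.div continuousOn_const (continuousOn_const.sub continuousOn_id)
    intro x hx
    rw [Set.uIcc_of_le (by norm_num)] at hx
    have hx1 : x ≤ 1 := hx.2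
    intro h; simp only [Pi.sub_apply, id_eq, ← ha_def] at h; linarith
  have hib : IntervalIntegrable (fun y : ℝ => 1 / (y - b)) MeasureTheory.volume 0 1 := by
    apply ContinuousOn.intervalIntegrable
    apply ContinuousOn.div continuousOn_const (continuousOn_id.sub continuousOn_const)
    intro x hx
    rw [Set.uIcc_of_le (by norm_num)] at hx
    have hx0 : 0 ≤ x := hx.1
    intro h; simp only [Pi.sub_apply, id_eq, ← hb_def] at h; linarith
  rw [intervalIntegral.integral_const_mul, intervalIntegral.integral_add hia hib]
  have hIa : (∫ y in (0:ℝ)..1, 1 / (a - y)) = Real.log (a / (a - 1)) := by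
    have h := intervalIntegral.integral_comp_sub_left (a := (0:ℝ)) (b := 1)
      (fun x : ℝ => 1 / x) a
    rw [h, show a - (0:ℝ) = a by ring, integral_one_div]
    rw [Set.uIcc_of_le (by linarith)]
    intro hmem
    exact absurd hmem.1 (by linarith)
  have hIb : (∫ y in (0:ℝ)..1, 1 / (y - b)) = Real.log ((1 - b) / (-b)) := by
    have h := intervalIntegral.integral_comp_sub_right (a := (0:ℝ)) (b := 1)
      (fun x : ℝ => 1 / x) b
    rw [h, show (0:ℝ) - b = -b by ring, integral_one_div]
    rw [Set.uIcc_of_le (by linarith)]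
    intro hmem
    have := hmem.1
    linarith
  have h4 : (0:ℝ) < a / (a - 1) := div_pos (by linarith) (by linarith)
  have h5 : (0:ℝ) < (1 - b) / (-b) := div_pos (by linarith) (by linarith)
  rw [hIa, hIb, ← Real.log_mul h4.ne' h5.ne']
  congr 2
  have e1 : 2 * p0 - p2 - p3 + s = 2 * p3 * (a * (1 - b)) := by
    rw [ha_def, hb_def]
    field_simp
    linear_combination -hs2
  have e2 : 2 * p0 - p2 - p3 - s = 2 * p3 * ((a - 1) * (-b)) := by
    rw [ha_def, hb_def]
    field_simp
    linear_combination -hs2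
  rw [e1, e2, mul_div_mul_left _ _ (by positivity : (2:ℝ) * p3 ≠ 0), div_mul_div_comm]
end

section
/- Let lambda > 0 and 0 < p < 1/(lambda+1). Set beta = (1-p)/(lambda*p+1), alpha = (lambda+1)*p/(lambda*(lambda*p+1)), c = lambda/(lambda+1), and define p0 = beta, p1 = alpha*c, p2 = 1 - beta - alpha*c, f(y) = p0 + p1*y + p2*y^2. Then the integral over [0,1] of (1-y)/(f(y)-y) with respect to y equals (1 + 1/(lambda*p)) * log((1-p)/(1-p-lambda*p)). -/
theorem stmt_4 (lam p : ℝ) (hlam : 0 < lam) (hp : 0 < p) (hp' : p < 1 / (lam + 1))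
    (β α c p0 p1 p2 : ℝ)
    (hβ : β = (1 - p) / (lam * p + 1))
    (hα : α = (lam + 1) * p / (lam * (lam * p + 1)))
    (hc : c = lam / (lam + 1))
    (hp0 : p0 = β) (hp1 : p1 = α * c) (hp2 : p2 = 1 - β - α * c) :
    ∫ y in (0:ℝ)..1, (1 - y) / ((p0 + p1 * y + p2 * y ^ 2) - y)
      = (1 + 1 / (lam * p)) * Real.log ((1 - p) / (1 - p - lam * p)) := by
  set r : ℝ := (1 - p) / (lam * p) with hr
  have hlp : 0 < lam * p := mul_pos hlam hp
  have hl1 : 0 < lam + 1 := by linarith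
  have hlp1 : 0 < lam * p + 1 := by linarith
  have hd : 0 < 1 - p - lam * p := by
    rw [lt_div_iff₀ hl1] at hp'; nlinarith
  have hr1 : 1 < r := by rw [hr, lt_div_iff₀ hlp]; linarith
  have hp2' : p2 = lam * p / (lam * p + 1) := by
    rw [hp2, hβ, hα, hc]; field_simp; ring
  have hp2pos : 0 < p2 := by rw [hp2']; positivity
  have hfac : ∀ y : ℝ, (p0 + p1 * y + p2 * y ^ 2) - y = p2 * (1 - y) * (r - y) := by
    intro y
    rw [hp0, hp1, hp2', hβ, hα, hc, hr]
    field_simp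
    ring
  have key : ∀ y : ℝ, y ≠ 1 →
      (1 - y) / ((p0 + p1 * y + p2 * y ^ 2) - y) = (1 / p2) * (r - y)⁻¹ := by
    intro y hy
    have hy' : 1 - y ≠ 0 := sub_ne_zero.2 (fun h => hy h.symm)
    rw [hfac]
    rcases eq_or_ne (r - y) 0 with hb | hb
    · simp [hb]
    · field_simp
  have hae : ∀ᵐ y : ℝ, y ≠ 1 := by
    rw [MeasureTheory.ae_iff]
    have : {y : ℝ | ¬ y ≠ 1} = {1} := by ext y; simp
    rw [this]
    exact Real.volume_singleton
  have hcong : ∫ y in (0:ℝ)..1, (1 - y) / ((p0 + p1 * y + p2 * y ^ 2) - y)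
      = ∫ y in (0:ℝ)..1, (1 / p2) * (r - y)⁻¹ := by
    apply intervalIntegral.integral_congr_ae
    filter_upwards [hae] with y hy _ using key y hy
  have hpos : ∀ y ∈ Set.uIcc (0:ℝ) 1, 0 < r - y := by
    intro y hy
    rw [Set.uIcc_of_le (by norm_num)] at hy
    have := hy.2
    linarith
  have hcont : ContinuousOn (fun y : ℝ => (r - y)⁻¹) (Set.uIcc (0:ℝ) 1) :=
    (continuousOn_const.sub continuousOn_id).inv₀ fun y hy => ne_of_gt (hpos y hy)
  have hint : ∫ y in (0:ℝ)..1, (r - y)⁻¹ = Real.log r - Real.log (r - 1) := by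
    have h := intervalIntegral.integral_eq_sub_of_hasDerivAt
      (f := fun y : ℝ => -Real.log (r - y)) (f' := fun y : ℝ => (r - y)⁻¹)
      (a := 0) (b := 1)
      (fun y hy => by
        have h1 : HasDerivAt (fun y : ℝ => r - y) (-1) y := by
          exact (hasDerivAt_id' y).const_sub r
        have h2 := (Real.hasDerivAt_log (ne_of_gt (hpos y hy))).comp y h1
        have h3 := h2.neg
        convert h3 using 1
        · rfl
        · ring)
      (hcont.intervalIntegrable)
    rw [h]
    simp
    ring
  rw [hcong, intervalIntegral.integral_const_mul, hint]
  have hrne : r ≠ 0 := by positivity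
  have hr1ne : r - 1 ≠ 0 := by linarith
  rw [← Real.log_div hrne hr1ne]
  have hsub : r - 1 = (1 - p - lam * p) / (lam * p) := by
    rw [hr]; field_simp
  have harg : r / (r - 1) = (1 - p) / (1 - p - lam * p) := by
    rw [hr, hsub, div_div_div_cancel_right₀]
    exact ne_of_gt hlp
  have hcoef : 1 / p2 = 1 + 1 / (lam * p) := by
    rw [hp2', one_div_div]; field_simp
  rw [harg, hcoef]
end

section
/- Let lambda > 0 and 0 < p < (lambda+1)/(2*lambda^2+2*lambda+1). Set beta = (1-p)/(lambda*p+1), alpha = (lambda+1)*p/(lambda*(lambda*p+1)), c = lambda/(lambda+1), and define p0 = beta, p1 = alpha*c, p2 = alpha*c^2, p3 = 1 - beta - alpha*c - alpha*c^2, f(y) = p0 + p1*y + p2*y^2 + p3*y^3. Then the integral over [0,1] of (1-y)/(f(y)-y) with respect to y equals ((lambda*p+1)/(lambda*p)) * sqrt(p*(lambda+1)/(4+lambda*p-3*p)) * log( ((2-2*p-lambda*p)*sqrt(p*(lambda+1)) + lambda*p*sqrt(4+lambda*p-3*p)) / ((2-2*p-lambda*p)*sqrt(p*(lambda+1)) -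 lambda*p*sqrt(4+lambda*p-3*p)) ). -/
set_option maxHeartbeats 1000000 in
theorem stmt_5 (lam p : ℝ) (hlam : 0 < lam) (hp : 0 < p)
    (hp' : p < (lam + 1) / (2 * lam ^ 2 + 2 * lam + 1))
    (β α c p0 p1 p2 p3 : ℝ)
    (hβ : β = (1 - p) / (lam * p + 1))
    (hα : α = (lam + 1) * p / (lam * (lam * p + 1)))
    (hc : c = lam / (lam + 1))
    (hp0 : p0 = β) (hp1 : p1 = α * c) (hp2 : p2 = α * c ^ 2)
    (hp3 : p3 = 1 - β - α * c - α * c ^ 2) :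
    ∫ y in (0:ℝ)..1, (1 - y) / ((p0 + p1 * y + p2 * y ^ 2 + p3 * y ^ 3) - y)
      = ((lam * p + 1) / (lam * p)) * Real.sqrt (p * (lam + 1) / (4 + lam * p - 3 * p)) *
        Real.log
          (((2 - 2 * p - lam * p) * Real.sqrt (p * (lam + 1))
              + lam * p * Real.sqrt (4 + lam * p - 3 * p)) /
            ((2 - 2 * p - lam * p) * Real.sqrt (p * (lam + 1))
              - lam * p * Real.sqrt (4 + lam * p - 3 * p))) := by
  subst hp0 hp1 hp2 hp3 hβ hα hc
  have hl1 : (0:ℝ) < lam + 1 := by linarith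
  have hden : (0:ℝ) < 2 * lam ^ 2 + 2 * lam + 1 := by positivity
  have hpA : p * (2 * lam ^ 2 + 2 * lam + 1) < lam + 1 := (lt_div_iff₀ hden).mp hp'
  have hple : p < 1 := by nlinarith
  have h4 : (0:ℝ) < 4 + lam * p - 3 * p := by nlinarith
  have hD : (0:ℝ) < lam * p + 1 := by positivity
  set s1 := Real.sqrt (p * (lam + 1)) with hs1def
  set s2 := Real.sqrt (4 + lam * p - 3 * p) with hs2def
  have hs1sq : s1 ^ 2 = p * (lam + 1) := Real.sq_sqrt (by positivity)
  have hs2sq : s2 ^ 2 = 4 + lam * p - 3 * p := Real.sq_sqrt h4.le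
  have hs1pos : 0 < s1 := Real.sqrt_pos.mpr (by positivity)
  have hs2pos : 0 < s2 := Real.sqrt_pos.mpr h4
  have hprodsq : (s1 * s2) ^ 2 = p * (lam + 1) * (4 + lam * p - 3 * p) := by
    rw [mul_pow, hs1sq, hs2sq]
  have hSgt : (3 * lam + 1) * p < s1 * s2 := by
    nlinarith [mul_pos hs1pos hs2pos, hprodsq, sq_nonneg (s1 * s2 + (3 * lam + 1) * p)]
  set rp := (s1 * s2 - (lam + 1) * p) / (2 * lam * p) with hrpdef
  set rm := -((lam + 1) * p + s1 * s2) / (2 * lam * p) with hrmdef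
  have hlp : (0:ℝ) < 2 * lam * p := by positivity
  have hrm : rm < 0 := div_neg_of_neg_of_pos
    (by nlinarith [mul_pos hs1pos hs2pos]) hlp
  have hrp1 : 1 < rp := by
    rw [hrpdef, lt_div_iff₀ hlp]; nlinarith
  -- quadratic factorization
  have hquad : ∀ x : ℝ, lam ^ 2 * p * ((rp - x) * (x - rm))
      = (lam + 1) * (1 - p) - lam * (lam + 1) * p * x - lam ^ 2 * p * x ^ 2 := by
    intro x
    rw [hrpdef, hrmdef]
    field_simp
    linear_combination (lam ^ 2 * p * s2 ^ 2) * hs1sq + (lam ^ 2 * p ^ 2 * (lam + 1)) * hs2sq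
      + ((1 - p * lam ^ 2) * s2 ^ 2) * hs1sq + ((1 - p * lam ^ 2) * (p * (lam + 1))) * hs2sq
  -- factorization of the cubic
  have hfac : ∀ x : ℝ,
      ((1 - p) / (lam * p + 1) + (lam + 1) * p / (lam * (lam * p + 1)) * (lam / (lam + 1)) * x
        + (lam + 1) * p / (lam * (lam * p + 1)) * (lam / (lam + 1)) ^ 2 * x ^ 2
        + (1 - (1 - p) / (lam * p + 1) - (lam + 1) * p / (lam * (lam * p + 1)) * (lam / (lam + 1))
            - (lam + 1) * p / (lam * (lam * p + 1)) * (lam / (lam + 1)) ^ 2) * x ^ 3) - x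
      = (1 - x) * ((lam ^ 2 * p * ((rp - x) * (x - rm))) / ((lam * p + 1) * (lam + 1))) := by
    intro x
    rw [hquad x]
    field_simp
    ring
  set G : ℝ → ℝ := fun x => ((lam * p + 1) * (lam + 1)) / (lam ^ 2 * p * ((rp - x) * (x - rm)))
    with hGdef
  -- Step 1: replace the integrand a.e.
  have hstep1 : (∫ y in (0:ℝ)..1,
      (1 - y) / (((1 - p) / (lam * p + 1) + (lam + 1) * p / (lam * (lam * p + 1)) * (lam / (lam + 1)) * y
        + (lam + 1) * p / (lam * (lam * p + 1)) * (lam / (lam + 1)) ^ 2 * y ^ 2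
        + (1 - (1 - p) / (lam * p + 1) - (lam + 1) * p / (lam * (lam * p + 1)) * (lam / (lam + 1))
            - (lam + 1) * p / (lam * (lam * p + 1)) * (lam / (lam + 1)) ^ 2) * y ^ 3) - y))
      = ∫ y in (0:ℝ)..1, G y := by
    apply intervalIntegral.integral_congr_ae
    have hne : ∀ᵐ x : ℝ, x ≠ 1 := by
      rw [MeasureTheory.ae_iff]
      simp only [ne_eq, not_not, Set.setOf_eq_eq_singleton]
      exact Real.volume_singleton
    filter_upwards [hne] with x hx1 hxmem
    rw [Set.uIoc_of_le (by norm_num : (0:ℝ) ≤ 1)] at hxmem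
    obtain ⟨hx0, hxle⟩ := hxmem
    have hxlt : x < 1 := lt_of_le_of_ne hxle hx1
    have h1x : (1:ℝ) - x ≠ 0 := by linarith
    have hq1 : 0 < rp - x := by linarith
    have hq2 : 0 < x - rm := by linarith
    rw [hfac x]
    simp only [hGdef]
    have hQ : (0:ℝ) < lam ^ 2 * p * ((rp - x) * (x - rm)) :=
      mul_pos (by positivity) (mul_pos hq1 hq2)
    rw [div_eq_div_iff
      (ne_of_gt (mul_pos (by linarith : (0:ℝ) < 1 - x) (div_pos hQ (by positivity))))
      hQ.ne']
    field_simp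
  -- the antiderivative
  set C0 := (lam * p + 1) * (lam + 1) / (lam * (s1 * s2)) with hC0def
  set F : ℝ → ℝ := fun y => C0 * (Real.log (y - rm) - Real.log (rp - y)) with hFdef
  have hdiff : rp - rm = s1 * s2 / (lam * p) := by
    rw [hrpdef, hrmdef]; field_simp; ring
  have hderiv : ∀ x ∈ Set.uIcc (0:ℝ) 1, HasDerivAt F (G x) x := by
    intro x hx
    rw [Set.uIcc_of_le (by norm_num : (0:ℝ) ≤ 1)] at hx
    obtain ⟨hx0, hx1⟩ := hx
    have hxm : 0 < x - rm := by linarith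
    have hxp : 0 < rp - x := by linarith
    have d1 : HasDerivAt (fun y : ℝ => Real.log (y - rm)) ((x - rm)⁻¹) x := by
      have h := ((hasDerivAt_id x).sub_const rm).log hxm.ne'
      simpa using h
    have d2 : HasDerivAt (fun y : ℝ => Real.log (rp - y)) (-1 / (rp - x)) x := by
      have h := ((hasDerivAt_const x rp).sub (hasDerivAt_id x)).log hxp.ne'
      simpa using h
    have h := (d1.sub d2).const_mul C0
    have hCrr : C0 * (rp - rm) = (lam * p + 1) * (lam + 1) / (lam ^ 2 * p) := by
      rw [hC0def, hdiff, div_mul_div_comm, div_eq_div_iff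
        (ne_of_gt (mul_pos (mul_pos hlam (mul_pos hs1pos hs2pos)) (mul_pos hlam hp)))
        (ne_of_gt (by positivity : (0:ℝ) < lam ^ 2 * p))]
      ring
    have hGx : G x = C0 * ((x - rm)⁻¹ - -1 / (rp - x)) := by
      have e : (x - rm)⁻¹ - -1 / (rp - x) = (rp - rm) / ((rp - x) * (x - rm)) := by
        rw [inv_eq_one_div, neg_div, sub_neg_eq_add, div_add_div _ _ hxm.ne' hxp.ne',
            div_eq_div_iff (ne_of_gt (mul_pos hxm hxp)) (ne_of_gt (mul_pos hxp hxm))]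
        ring
      rw [e, mul_div_assoc', hCrr, div_div]
    rw [hFdef]
    exact hGx ▸ h
  have hint : IntervalIntegrable G MeasureTheory.volume 0 1 := by
    apply ContinuousOn.intervalIntegrable
    apply ContinuousOn.div continuousOn_const
    · fun_prop
    · intro x hx
      rw [Set.uIcc_of_le (by norm_num : (0:ℝ) ≤ 1)] at hx
      obtain ⟨hx0, hx1⟩ := hx
      have hxm : 0 < x - rm := by linarith
      have hxp : 0 < rp - x := by linarith
      exact ne_of_gt (by positivity)
  have hFTC := intervalIntegral.integral_eq_sub_of_hasDerivAt hderiv hint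
  rw [hstep1, hFTC]
  -- final algebra
  set N := (2 - 2 * p - lam * p) * s1 + lam * p * s2 with hNdef
  set Dn := (2 - 2 * p - lam * p) * s1 - lam * p * s2 with hDndef
  set X := rp * (1 - rm) with hXdef
  set Y := (rp - 1) * (-rm) with hYdef
  have hXpos : 0 < X := by
    rw [hXdef]; exact mul_pos (by linarith) (by linarith)
  have hYpos : 0 < Y := by
    rw [hYdef]; exact mul_pos (by linarith) (by linarith)
  have hs1N : s1 * N = 2 * lam ^ 2 * p ^ 2 * X := by
    rw [hNdef, hXdef, hrpdef, hrmdef]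
    field_simp
    linear_combination (2 * lam ^ 2 * p ^ 2 * (2 - 2 * p - lam * p)) * hs1sq
      - (lam ^ 2 * p ^ 2) * hprodsq
      + (4 * p ^ 2 * lam ^ 2 - p ^ 2 * lam ^ 2 * s2 ^ 2 - 4 * p ^ 3 * lam ^ 2
          - 2 * p ^ 3 * lam ^ 3) * hs1sq
      - (p ^ 3 * lam ^ 2 * (lam + 1)) * hs2sq
      + ((4 - 4 * p - 2 * p * lam - 8 * p ^ 2 * lam ^ 2 + 8 * p ^ 3 * lam ^ 2 + 4 * p ^ 3 * lam ^ 3)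
          + (2 * p ^ 2 * lam ^ 2 - 1) * s2 ^ 2) * hs1sq
      + ((2 * p ^ 2 * lam ^ 2 - 1) * (p * (lam + 1))) * hs2sq
  have hs1Dn : s1 * Dn = 2 * lam ^ 2 * p ^ 2 * Y := by
    rw [hDndef, hYdef, hrpdef, hrmdef]
    field_simp
    linear_combination (2 * lam ^ 2 * p ^ 2 * (2 - 2 * p - lam * p)) * hs1sq
      - (lam ^ 2 * p ^ 2) * hprodsq
      + (4 * p ^ 2 * lam ^ 2 - p ^ 2 * lam ^ 2 * s2 ^ 2 - 4 * p ^ 3 * lam ^ 2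
          - 2 * p ^ 3 * lam ^ 3) * hs1sq
      - (p ^ 3 * lam ^ 2 * (lam + 1)) * hs2sq
      + ((4 - 4 * p - 2 * p * lam - 8 * p ^ 2 * lam ^ 2 + 8 * p ^ 3 * lam ^ 2 + 4 * p ^ 3 * lam ^ 3)
          + (2 * p ^ 2 * lam ^ 2 - 1) * s2 ^ 2) * hs1sq
      + ((2 * p ^ 2 * lam ^ 2 - 1) * (p * (lam + 1))) * hs2sq
  have hNpos : 0 < N := by nlinarith [mul_pos hs1pos (mul_pos hlp hlp)]
  have hDnpos : 0 < Dn := by nlinarith [mul_pos hs1pos (mul_pos hlp hlp)]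
  have hXY : X / Y = N / Dn := by
    rw [div_eq_div_iff hYpos.ne' hDnpos.ne']
    have key : s1 * (X * Dn) = s1 * (N * Y) := by
      linear_combination X * hs1Dn - Y * hs1N
    exact mul_left_cancel₀ hs1pos.ne' key
  have hsqrtdiv : Real.sqrt (p * (lam + 1) / (4 + lam * p - 3 * p)) = s1 / s2 := by
    rw [hs1def, hs2def, ← Real.sqrt_div (by positivity)]
  have hC0eq : (lam * p + 1) / (lam * p) * (s1 / s2) = C0 := by
    rw [hC0def]
    field_simp
    linear_combination (lam * (lam * p + 1) * s2) * hs1sq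
      + (1 - lam * s2 - lam ^ 2 * p * s2) * hs1sq
  rw [hsqrtdiv, hC0eq]
  have hlogs : F 1 - F 0 = C0 * (Real.log X - Real.log Y) := by
    rw [hFdef, hXdef, hYdef]
    simp only [zero_sub, sub_zero]
    rw [Real.log_mul (ne_of_gt (by linarith : (0:ℝ) < rp)) (ne_of_gt (by linarith : (0:ℝ) < 1 - rm)),
        Real.log_mul (ne_of_gt (by linarith : (0:ℝ) < rp - 1)) (ne_of_gt (by linarith : (0:ℝ) < -rm))]
    ring
  rw [hlogs, ← Real.log_div hXpos.ne' hYpos.ne', hXY]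
end

section
/- Let lambda > 0 and 0 < p < (lambda+2)/(lambda^2+2*lambda+2). Set beta = (1-p)/(lambda*p+1), alpha = (lambda+1)*p/(lambda*(lambda*p+1)), c = lambda/(lambda+1), and define p0 = beta, p1 = 2*alpha*c/(2-c), p2 = 1 - beta - 2*alpha*c/(2-c), f(y) = p0 + p1*y + p2*y^2. Then the integral over [0,1] of (1-y)/(f(y)-y) with respect to y equals ((lambda+2)*(lambda*p+1)/(lambda*p*(lambda+1))) * log( (1-p)*(lambda+2) / (lambda+2 - p*(lambda^2+2*lambda+2)) ). -/
theorem stmt_6 (lam p : ℝ) (hlam : 0 < lam) (hp : 0 < p)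
    (hp' : p < (lam + 2) / (lam ^ 2 + 2 * lam + 2))
    (β α c p0 p1 p2 : ℝ)
    (hβ : β = (1 - p) / (lam * p + 1))
    (hα : α = (lam + 1) * p / (lam * (lam * p + 1)))
    (hc : c = lam / (lam + 1))
    (hp0 : p0 = β) (hp1 : p1 = 2 * α * c / (2 - c)) (hp2 : p2 = 1 - β - 2 * α * c / (2 - c)) :
    ∫ y in (0:ℝ)..1, (1 - y) / ((p0 + p1 * y + p2 * y ^ 2) - y)
      = ((lam + 2) * (lam * p + 1) / (lam * p * (lam + 1))) *
        Real.log ((1 - p) * (lam + 2) / (lam + 2 - p * (lam ^ 2 + 2 * lam + 2))) := by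
  have hl1 : (0:ℝ) < lam + 1 := by linarith
  have hl2 : (0:ℝ) < lam + 2 := by linarith
  have hlp : (0:ℝ) < lam * p + 1 := by positivity
  have hq : (0:ℝ) < lam ^ 2 + 2 * lam + 2 := by positivity
  have hD : 0 < lam + 2 - p * (lam ^ 2 + 2 * lam + 2) := by
    have := (lt_div_iff₀ hq).mp hp'
    linarith
  have h1p : 0 < 1 - p := by nlinarith
  set A := lam * p * (lam + 1) with hA
  have hApos : 0 < A := by positivity
  set r := (1 - p) * (lam + 2) / A with hr
  have hp2v : p2 = A / ((lam * p + 1) * (lam + 2)) := by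
    rw [hp2, hβ, hα, hc, hA]
    have h2c : (2:ℝ) - lam / (lam + 1) = (lam + 2) / (lam + 1) := by
      field_simp; ring
    rw [h2c]
    field_simp
    ring
  have hp2pos : 0 < p2 := by rw [hp2v]; positivity
  have hr1 : 1 < r := by
    rw [hr, lt_div_iff₀ hApos]; nlinarith
  have hp0r : p0 = p2 * r := by
    rw [hp0, hβ, hp2v, hr]
    field_simp
  have hsum : p1 = 1 - p0 - p2 := by rw [hp1, hp0, hp2]; ring
  have hfac : ∀ y : ℝ, (p0 + p1 * y + p2 * y ^ 2) - y = (1 - y) * (p2 * (r - y)) := by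
    intro y; rw [hsum, hp0r]; ring
  have hcongr : ∫ y in (0:ℝ)..1, (1 - y) / ((p0 + p1 * y + p2 * y ^ 2) - y)
      = ∫ y in (0:ℝ)..1, p2⁻¹ * (r - y)⁻¹ := by
    apply intervalIntegral.integral_congr_ae
    have h1 : ∀ᵐ (y : ℝ), y ≠ 1 := by
      refine MeasureTheory.ae_iff.mpr ?_
      simp
    filter_upwards [h1] with y hy _
    have h1y : 1 - y ≠ 0 := sub_ne_zero.mpr (Ne.symm hy)
    rw [hfac y, div_mul_cancel_left₀ h1y, mul_inv]
  rw [hcongr, intervalIntegral.integral_const_mul]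
  have hint : ∫ y in (0:ℝ)..1, (r - y)⁻¹ = Real.log (r / (r - 1)) := by
    rw [intervalIntegral.integral_comp_sub_left (fun x => x⁻¹) r]
    simp only [sub_zero]
    rw [integral_inv]
    exact Set.notMem_uIcc_of_lt (by linarith) (by linarith)
  rw [hint]
  have hrr : r / (r - 1)
      = (1 - p) * (lam + 2) / (lam + 2 - p * (lam ^ 2 + 2 * lam + 2)) := by
    have hr1' : r - 1 = (lam + 2 - p * (lam ^ 2 + 2 * lam + 2)) / A := by
      rw [hr]; field_simp; ring
    rw [hr1', hr, div_div_div_eq, mul_comm A, mul_div_mul_right _ _ hApos.ne']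
  rw [hrr, hp2v]
  rw [inv_div]
  ring
end

section
/- Let lambda > 0 and 0 < p < (lambda+3)/(2*lambda^2+3*lambda+3). Set beta = (1-p)/(lambda*p+1), alpha = (lambda+1)*p/(lambda*(lambda*p+1)), c = lambda/(lambda+1), and define p0 = beta, p1 = 3*alpha*c/(3-c), p2 = 6*alpha*c^2/((3-2*c)*(3-c)), p3 = 1 - p0 - p1 - p2, f(y) = p0 + p1*y + p2*y^2 + p3*y^3. Let g = (lambda+3)*(2*lambda+3-3*lambda*p-3*p-lambda^2*p) and h = lambda*sqrt(p*(lambda+1)*(p*lambda^2+4*lambda+6-3*p)*(lambda+3)). Then the integral over [0,1] of (1-y)/(f(y)-y) with respect to y equals ((lambda*p+1)*(2*lambda+3)*(lambda+3)/(2*h)) * log((g+h)/(g-h)). -/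
private lemma quadPos (A0 A1 A2 y : ℝ) (h0 : 0 < A0) (h1 : 0 < A0 + A1 + A2) (h2 : A2 < 0)
    (hy0 : 0 ≤ y) (hy1 : y ≤ 1) : 0 < A0 + A1 * y + A2 * y ^ 2 := by
  nlinarith [mul_nonneg hy0 (sub_nonneg.mpr hy1), mul_nonneg hy0 h1.le,
    mul_nonneg (sub_nonneg.mpr hy1) h0.le, mul_pos h0 h1,
    mul_nonneg (mul_nonneg hy0 (sub_nonneg.mpr hy1)) (neg_nonneg.mpr h2.le)]
private lemma boundsOf (u s : ℝ) (hs : 0 < s) (h : u ^ 2 < s ^ 2) : u - s < 0 ∧ 0 < u + s :=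
  ⟨by nlinarith, by nlinarith⟩
private lemma ltOfSq (g h r : ℝ) (e : g ^ 2 - h ^ 2 = r) (hr : 0 < r) (hh : 0 < h) (hg : 0 < g) : h < g := by
  nlinarith [mul_pos hh hg]

set_option maxHeartbeats 1000000 in
theorem stmt_7 (lam p : ℝ) (hlam : 0 < lam) (hp : 0 < p)
    (hp' : p < (lam + 3) / (2 * lam ^ 2 + 3 * lam + 3))
    (β α c p0 p1 p2 p3 g h : ℝ)
    (hβ : β = (1 - p) / (lam * p + 1))
    (hα : α = (lam + 1) * p / (lam * (lam * p + 1)))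
    (hc : c = lam / (lam + 1))
    (hp0 : p0 = β) (hp1 : p1 = 3 * α * c / (3 - c))
    (hp2 : p2 = 6 * α * c ^ 2 / ((3 - 2 * c) * (3 - c)))
    (hp3 : p3 = 1 - p0 - p1 - p2)
    (hg : g = (lam + 3) * (2 * lam + 3 - 3 * lam * p - 3 * p - lam ^ 2 * p))
    (hh : h = lam * Real.sqrt (p * (lam + 1) * (p * lam ^ 2 + 4 * lam + 6 - 3 * p) * (lam + 3))) :
    ∫ y in (0:ℝ)..1, (1 - y) / ((p0 + p1 * y + p2 * y ^ 2 + p3 * y ^ 3) - y)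
      = ((lam * p + 1) * (2 * lam + 3) * (lam + 3) / (2 * h)) *
        Real.log ((g + h) / (g - h)) := by
  -- abbreviations
  obtain ⟨A0, hA0⟩ : ∃ x : ℝ, x = (1 - p) * ((lam + 3) * (2 * lam + 3)) := ⟨_, rfl⟩
  obtain ⟨A1, hA1⟩ : ∃ x : ℝ, x = -(2 * p * lam * (lam + 1) * (lam + 3)) := ⟨_, rfl⟩
  obtain ⟨A2, hA2⟩ : ∃ x : ℝ, x = -(2 * p * lam ^ 2 * (lam + 1)) := ⟨_, rfl⟩
  obtain ⟨D, hD⟩ : ∃ x : ℝ, x = (lam * p + 1) * ((lam + 3) * (2 * lam + 3)) := ⟨_, rfl⟩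
  -- positivity basics
  have hl1 : (0:ℝ) < lam + 1 := by linarith
  have hl3 : (0:ℝ) < lam + 3 := by linarith
  have hl23 : (0:ℝ) < 2 * lam + 3 := by linarith
  have hquad : (0:ℝ) < 2 * lam ^ 2 + 3 * lam + 3 := by nlinarith
  have hsub : p * (2 * lam ^ 2 + 3 * lam + 3) < lam + 3 := by
    have := (lt_div_iff₀ hquad).mp hp'
    linarith
  have hplt1 : p < 1 := by nlinarith
  have hlp1 : (0:ℝ) < lam * p + 1 := by nlinarith
  have hDpos : 0 < D := by rw [hD]; positivity
  have hDne : D ≠ 0 := ne_of_gt hDpos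
  -- h facts
  have hfac : 0 < p * lam ^ 2 + 4 * lam + 6 - 3 * p := by nlinarith
  have hargpos : 0 < p * (lam + 1) * (p * lam ^ 2 + 4 * lam + 6 - 3 * p) :=
    mul_pos (mul_pos hp hl1) hfac
  have hargpos' : 0 < p * (lam + 1) * (p * lam ^ 2 + 4 * lam + 6 - 3 * p) * (lam + 3) :=
    mul_pos hargpos hl3
  have hhpos : 0 < h := by
    rw [hh]; exact mul_pos hlam (Real.sqrt_pos.mpr hargpos')
  have hH : h ^ 2 = lam ^ 2 * (p * (lam + 1) * (p * lam ^ 2 + 4 * lam + 6 - 3 * p) * (lam + 3)) := by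
    rw [hh, mul_pow, Real.sq_sqrt hargpos'.le]
  -- g facts
  have hgpos : 0 < g := by rw [hg]; nlinarith
  have hgh : h < g := by
    have h2 : g ^ 2 - h ^ 2 =
        (lam + 3) * (2 * lam + 3) ^ 2 * ((lam + 3) - p * (2 * lam ^ 2 + 3 * lam + 3)) * (1 - p) := by
      rw [hg]; linear_combination -hH
    have hpr : 0 < (lam + 3) * (2 * lam + 3) ^ 2 * ((lam + 3) - p * (2 * lam ^ 2 + 3 * lam + 3)) * (1 - p) :=
      mul_pos (mul_pos (mul_pos hl3 (by positivity)) (by linarith)) (by linarith)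
    exact ltOfSq g h _ h2 hpr hhpos hgpos
  have hgmh : 0 < g - h := by linarith
  have hgph : 0 < g + h := by linarith
  -- explicit p_i
  have hlne : lam ≠ 0 := hlam.ne'
  have hl1ne : lam + 1 ≠ 0 := hl1.ne'
  have hlp1ne : lam * p + 1 ≠ 0 := hlp1.ne'
  have h3c : 3 - c = (2 * lam + 3) / (lam + 1) := by rw [hc]; field_simp; ring
  have h32c : 3 - 2 * c = (lam + 3) / (lam + 1) := by rw [hc]; field_simp; ring
  have e0 : p0 = A0 / D := by rw [hp0, hβ, hA0, hD]; field_simp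
  have h23ne : (2 * lam + 3) ≠ 0 := hl23.ne'
  have hl3ne : (lam + 3) ≠ 0 := hl3.ne'
  have e1 : p1 = 3 * p * (lam + 1) * (lam + 3) / D := by
    rw [hp1, hα, h3c, hc, hD]; field_simp
  have e2 : p2 = 6 * p * lam * (lam + 1) / D := by
    rw [hp2, hα, h32c, h3c, hc, hD]; field_simp
  have e3 : p3 = 2 * p * lam ^ 2 * (lam + 1) / D := by
    rw [hp3, e0, e1, e2, hA0, hD]; field_simp; ring
  -- key per-point facts
  have hA2neg : A2 < 0 := by rw [hA2]; nlinarith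
  have hA2ne : A2 ≠ 0 := hA2neg.ne
  have hA0pos : 0 < A0 := by
    rw [hA0]; exact mul_pos (by linarith) (by positivity)
  have hQ1pos : 0 < A0 + A1 + A2 := by
    rw [hA0, hA1, hA2]
    nlinarith [mul_pos hl23 (show (0:ℝ) < lam + 3 - p * (2 * lam ^ 2 + 3 * lam + 3) by linarith)]
  have hQpos : ∀ y : ℝ, 0 ≤ y → y ≤ 1 → 0 < A0 + A1 * y + A2 * y ^ 2 := fun y hy0 hy1 =>
    quadPos A0 A1 A2 y hA0pos hQ1pos hA2neg hy0 hy1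
  have hu2 : ∀ y : ℝ, (A1 + 2 * A2 * y) ^ 2 - (2 * h) ^ 2 = 4 * A2 * (A0 + A1 * y + A2 * y ^ 2) := by
    intro y
    rw [hA0, hA1, hA2]; linear_combination (-4 : ℝ) * hH
  have hsq : ∀ y : ℝ, 0 ≤ y → y ≤ 1 → (A1 + 2 * A2 * y) ^ 2 < (2 * h) ^ 2 := by
    intro y hy0 hy1
    have t : 4 * A2 * (A0 + A1 * y + A2 * y ^ 2) < 0 :=
      mul_neg_of_neg_of_pos (by linarith) (hQpos y hy0 hy1)
    linarith [hu2 y]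
  have h2hpos : (0:ℝ) < 2 * h := by linarith
  have hv1 : ∀ y : ℝ, 0 ≤ y → y ≤ 1 → A1 + 2 * A2 * y - 2 * h < 0 := fun y hy0 hy1 =>
    (boundsOf _ _ h2hpos (hsq y hy0 hy1)).1
  have hv2 : ∀ y : ℝ, 0 ≤ y → y ≤ 1 → 0 < A1 + 2 * A2 * y + 2 * h := fun y hy0 hy1 =>
    (boundsOf _ _ h2hpos (hsq y hy0 hy1)).2
  have hhne : (2 : ℝ) * h ≠ 0 := by positivity
  -- Step 1: rewrite the integrand a.e.
  have hstep1 : (∫ y in (0:ℝ)..1, (1 - y) / ((p0 + p1 * y + p2 * y ^ 2 + p3 * y ^ 3) - y))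
      = ∫ y in (0:ℝ)..1, D / (A0 + A1 * y + A2 * y ^ 2) := by
    apply intervalIntegral.integral_congr_ae
    filter_upwards [MeasureTheory.compl_mem_ae_iff.mpr (MeasureTheory.measure_singleton (1:ℝ))]
      with y hy1 hy
    have hyne : y ≠ 1 := hy1
    rw [Set.uIoc_of_le (by norm_num : (0:ℝ) ≤ 1)] at hy
    have hQ := hQpos y hy.1.le hy.2
    have hfval : (p0 + p1 * y + p2 * y ^ 2 + p3 * y ^ 3) - y
        = (1 - y) * (A0 + A1 * y + A2 * y ^ 2) / D := by
      rw [e0, e1, e2, e3, hA0, hA1, hA2, hD]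
      field_simp
      ring
    rw [hfval]
    have h1y : (1 : ℝ) - y ≠ 0 := sub_ne_zero.mpr (Ne.symm hyne)
    field_simp
  -- Step 2: FTC
  have hstep2 : (∫ y in (0:ℝ)..1, D / (A0 + A1 * y + A2 * y ^ 2))
      = (D / (2 * h)) * (Real.log (A1 + 2 * A2 * 1 - 2 * h) - Real.log (A1 + 2 * A2 * 1 + 2 * h))
        - (D / (2 * h)) * (Real.log (A1 + 2 * A2 * 0 - 2 * h) - Real.log (A1 + 2 * A2 * 0 + 2 * h)) := by
    refine intervalIntegral.integral_eq_sub_of_hasDerivAt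
      (f := fun y => (D / (2 * h)) * (Real.log (A1 + 2 * A2 * y - 2 * h)
        - Real.log (A1 + 2 * A2 * y + 2 * h)))
      (f' := fun y => D / (A0 + A1 * y + A2 * y ^ 2)) (fun y hy => ?_) ?_
    · rw [Set.uIcc_of_le (by norm_num : (0:ℝ) ≤ 1)] at hy
      have hy0 := hy.1
      have hy1 := hy.2
      have hQ := hQpos y hy0 hy1
      have hw1 := hv1 y hy0 hy1
      have hw2 := hv2 y hy0 hy1
      have d1 : HasDerivAt (fun t : ℝ => A1 + 2 * A2 * t - 2 * h) (2 * A2) y := by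
        simpa using (((hasDerivAt_id y).const_mul (2 * A2)).const_add A1).sub_const (2 * h)
      have d2 : HasDerivAt (fun t : ℝ => A1 + 2 * A2 * t + 2 * h) (2 * A2) y := by
        simpa using (((hasDerivAt_id y).const_mul (2 * A2)).const_add A1).add_const (2 * h)
      have dlog := ((d1.log hw1.ne).sub (d2.log hw2.ne')).const_mul (D / (2 * h))
      have hgoal : D / (A0 + A1 * y + A2 * y ^ 2)
          = (D / (2 * h)) * (2 * A2 / (A1 + 2 * A2 * y - 2 * h) - 2 * A2 / (A1 + 2 * A2 * y + 2 * h)) := by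
        have hv1v2 : (A1 + 2 * A2 * y - 2 * h) * (A1 + 2 * A2 * y + 2 * h)
            = 4 * A2 * (A0 + A1 * y + A2 * y ^ 2) := by linear_combination hu2 y
        rw [div_sub_div _ _ hw1.ne hw2.ne']
        rw [show (2 * A2 * (A1 + 2 * A2 * y + 2 * h) - (A1 + 2 * A2 * y - 2 * h) * (2 * A2))
            = 8 * A2 * h by ring]
        rw [hv1v2]
        field_simp
        ring
      show HasDerivAt _ (D / (A0 + A1 * y + A2 * y ^ 2)) y
      rw [hgoal]
      exact dlog
    · apply ContinuousOn.intervalIntegrable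
      apply ContinuousOn.div continuousOn_const
      · exact Continuous.continuousOn (by fun_prop)
      · intro y hy
        rw [Set.uIcc_of_le (by norm_num : (0:ℝ) ≤ 1)] at hy
        exact (hQpos y hy.1 hy.2).ne'
  -- Step 3: evaluate
  obtain ⟨M, hM⟩ : ∃ x : ℝ, x = 8 * p * lam ^ 2 * (lam + 1) := ⟨_, rfl⟩
  have hMpos : 0 < M := by rw [hM]; positivity
  have hw1_1 := hv1 1 (by norm_num) (by norm_num)
  have hw2_1 := hv2 1 (by norm_num) (by norm_num)
  have hw1_0 := hv1 0 (by norm_num) (by norm_num)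
  have hw2_0 := hv2 0 (by norm_num) (by norm_num)
  have hm1 : (2 * h - (A1 + 2 * A2 * 1)) * ((A1 + 2 * A2 * 0) + 2 * h) = M * (g + h) := by
    rw [hA1, hA2, hg, hM]; linear_combination (4 : ℝ) * hH
  have hm2 : ((A1 + 2 * A2 * 1) + 2 * h) * (2 * h - (A1 + 2 * A2 * 0)) = M * (g - h) := by
    rw [hA1, hA2, hg, hM]; linear_combination (4 : ℝ) * hH
  have l1 : Real.log (A1 + 2 * A2 * 1 - 2 * h) = Real.log (2 * h - (A1 + 2 * A2 * 1)) := by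
    rw [show A1 + 2 * A2 * 1 - 2 * h = -(2 * h - (A1 + 2 * A2 * 1)) by ring, Real.log_neg_eq_log]
  have l0 : Real.log (A1 + 2 * A2 * 0 - 2 * h) = Real.log (2 * h - (A1 + 2 * A2 * 0)) := by
    rw [show A1 + 2 * A2 * 0 - 2 * h = -(2 * h - (A1 + 2 * A2 * 0)) by ring, Real.log_neg_eq_log]
  have k1 : Real.log (2 * h - (A1 + 2 * A2 * 1)) + Real.log ((A1 + 2 * A2 * 0) + 2 * h)
      = Real.log M + Real.log (g + h) := by
    rw [← Real.log_mul (by linarith) (by linarith), hm1, Real.log_mul hMpos.ne' hgph.ne']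
  have k2 : Real.log ((A1 + 2 * A2 * 1) + 2 * h) + Real.log (2 * h - (A1 + 2 * A2 * 0))
      = Real.log M + Real.log (g - h) := by
    rw [← Real.log_mul (by linarith) (by linarith), hm2, Real.log_mul hMpos.ne' hgmh.ne']
  rw [hstep1, hstep2, l1, l0, Real.log_div hgph.ne' hgmh.ne', hD]
  linear_combination
    ((lam * p + 1) * ((lam + 3) * (2 * lam + 3)) / (2 * h)) * k1
      - ((lam * p + 1) * ((lam + 3) * (2 * lam + 3)) / (2 * h)) * k2
end

section
/- Let lambda > 0 and 0 < p < 1. Set beta = (1-p)/(lambda*p+1), alpha = (lambda+1)*p/(lambda*(lambda*p+1)), c = lambda/(lambda+1), p1 = alpha*c, p2 = alpha*c^2, and p3 = 1 - beta - alpha*c - alpha*c^2. Then p1 + 2*p2 + 3*p3 < 1 if and only if p < (lambda+1)/(2*lambda^2+2*lambda+1), and p1 + 2*p2 + 3*p3 = 1 if and only if p = (lambda+1)/(2*lambda^2+2*lambda+1). -/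
theorem stmt_15 (lam p : ℝ) (hlam : 0 < lam) (hp : 0 < p) (hp' : p < 1)
    (β α c p1 p2 p3 : ℝ)
    (hβ : β = (1 - p) / (lam * p + 1))
    (hα : α = (lam + 1) * p / (lam * (lam * p + 1)))
    (hc : c = lam / (lam + 1))
    (hp1 : p1 = α * c) (hp2 : p2 = α * c ^ 2) (hp3 : p3 = 1 - β - α * c - α * c ^ 2) :
    (p1 + 2 * p2 + 3 * p3 < 1 ↔ p < (lam + 1) / (2 * lam ^ 2 + 2 * lam + 1)) ∧
    (p1 + 2 * p2 + 3 * p3 = 1 ↔ p = (lam + 1) / (2 * lam ^ 2 + 2 * lam + 1)) := by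
  subst hβ hα hc hp1 hp2 hp3
  have hD : 0 < lam * p + 1 := by nlinarith
  have hl1 : 0 < lam + 1 := by linarith
  have hQ : 0 < 2 * lam ^ 2 + 2 * lam + 1 := by nlinarith
  have hden : 0 < (lam + 1) * (lam * p + 1) := mul_pos hl1 hD
  set m := (lam + 1) * p / (lam * (lam * p + 1)) * (lam / (lam + 1)) +
      2 * ((lam + 1) * p / (lam * (lam * p + 1)) * (lam / (lam + 1)) ^ 2) +
      3 * (1 - (1 - p) / (lam * p + 1) - (lam + 1) * p / (lam * (lam * p + 1)) * (lam / (lam + 1)) -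
        (lam + 1) * p / (lam * (lam * p + 1)) * (lam / (lam + 1)) ^ 2) with hm
  have key : m - 1 = ((2 * lam ^ 2 + 2 * lam + 1) * p - (lam + 1)) / ((lam + 1) * (lam * p + 1)) := by
    rw [hm]
    field_simp
    ring
  constructor
  · constructor
    · intro h
      have h2 : ((2 * lam ^ 2 + 2 * lam + 1) * p - (lam + 1)) / ((lam + 1) * (lam * p + 1)) < 0 := by
        rw [← key]; linarith
      have hnum : (2 * lam ^ 2 + 2 * lam + 1) * p - (lam + 1) < 0 := by
        by_contra hcon
        push_neg at hcon
        have := div_nonneg hcon hden.le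
        linarith
      rw [lt_div_iff₀ hQ]; linarith
    · intro h
      rw [lt_div_iff₀ hQ] at h
      have hnum : (2 * lam ^ 2 + 2 * lam + 1) * p - (lam + 1) < 0 := by linarith
      have h2 := div_neg_of_neg_of_pos hnum hden
      linarith [key ▸ h2]
  · constructor
    · intro h
      have h2 : ((2 * lam ^ 2 + 2 * lam + 1) * p - (lam + 1)) / ((lam + 1) * (lam * p + 1)) = 0 := by
        rw [← key]; linarith
      have hnum : (2 * lam ^ 2 + 2 * lam + 1) * p - (lam + 1) = 0 := by
        rcases div_eq_zero_iff.mp h2 with h3 | h3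
        · exact h3
        · exact absurd h3 (ne_of_gt hden)
      rw [eq_div_iff (ne_of_gt hQ)]; linarith
    · intro h
      rw [eq_div_iff (ne_of_gt hQ)] at h
      have hnum : (2 * lam ^ 2 + 2 * lam + 1) * p - (lam + 1) = 0 := by linarith
      have h2 : m - 1 = 0 := by rw [key, hnum, zero_div]
      linarith
end

section
/- Let lambda > 0 and 0 < p < 1. Set beta = (1-p)/(lambda*p+1), alpha = (lambda+1)*p/(lambda*(lambda*p+1)), c = lambda/(lambda+1), p1 = 3*alpha*c/(3-c), p2 = 6*alpha*c^2/((3-2*c)*(3-c)), and p3 = 1 - beta - p1 - p2. Then p1 + 2*p2 + 3*p3 < 1 if and only if p < (lambda+3)/(2*lambda^2+3*lambda+3), and p1 + 2*p2 + 3*p3 = 1 if and only if p = (lambda+3)/(2*lambda^2+3*lambda+3). -/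
theorem stmt_17 (lam p : ℝ) (hlam : 0 < lam) (hp : 0 < p) (hp' : p < 1)
    (β α c p1 p2 p3 : ℝ)
    (hβ : β = (1 - p) / (lam * p + 1))
    (hα : α = (lam + 1) * p / (lam * (lam * p + 1)))
    (hc : c = lam / (lam + 1))
    (hp1 : p1 = 3 * α * c / (3 - c))
    (hp2 : p2 = 6 * α * c ^ 2 / ((3 - 2 * c) * (3 - c)))
    (hp3 : p3 = 1 - β - p1 - p2) :
    (p1 + 2 * p2 + 3 * p3 < 1 ↔ p < (lam + 3) / (2 * lam ^ 2 + 3 * lam + 3)) ∧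
    (p1 + 2 * p2 + 3 * p3 = 1 ↔ p = (lam + 3) / (2 * lam ^ 2 + 3 * lam + 3)) := by
  have h1 : (0:ℝ) < lam * p + 1 := by nlinarith
  have h2 : (0:ℝ) < lam + 1 := by linarith
  have h3 : (0:ℝ) < lam + 3 := by linarith
  have h4 : (0:ℝ) < 2 * lam + 3 := by linarith
  have h5 : (0:ℝ) < 2 * lam ^ 2 + 3 * lam + 3 := by nlinarith
  have h6 : (0:ℝ) < (lam * p + 1) * (lam + 3) := by positivity
  have hc32 : 3 - 2 * c = (lam + 3) / (lam + 1) := by rw [hc]; field_simp; ring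
  have hc3 : 3 - c = (2 * lam + 3) / (lam + 1) := by rw [hc]; field_simp; ring
  have key : p1 + 2 * p2 + 3 * p3 - 1 =
      (p * (2 * lam ^ 2 + 3 * lam + 3) - (lam + 3)) / ((lam * p + 1) * (lam + 3)) := by
    subst hp3 hp2 hp1 hβ hα
    rw [hc32, hc3, hc]
    field_simp
    ring
  constructor
  · rw [← sub_neg, key, div_lt_iff₀ h6, lt_div_iff₀ h5]
    constructor <;> intro h <;> nlinarith
  · rw [← sub_eq_zero, key, div_eq_zero_iff, eq_div_iff (ne_of_gt h5)]
    constructor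
    · rintro (h | h)
      · linarith
      · exact absurd h (ne_of_gt h6)
    · intro h; left; linarith
end

section
/- Let lambda > 0 and 0 < p < (lambda+1)/(2*lambda^2+2*lambda+1). Let g = (lambda+3)*(2*lambda+3-3*lambda*p-3*p-lambda^2*p) and h = lambda*sqrt(p*(lambda+1)*(p*lambda^2+4*lambda+6-3*p)*(lambda+3)). Then ((lambda*p+1)*(2*lambda+3)*(lambda+3)/(2*h)) * log((g+h)/(g-h)) <= ((lambda*p+1)/(lambda*p)) * sqrt(p*(lambda+1)/(4+lambda*p-3*p)) * log( ((2-2*p-lambda*p)*sqrt(p*(lambda+1)) + lambda*p*sqrt(4+lambda*p-3*p)) / ((2-2*p-lambda*p)*sqrt(p*(lambda+1)) - lambda*p*sqrt(4+lambda*p-3*p)) ). -/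
open Real

private lemma ratio_deriv {b : ℝ} (hb1 : b < 1) :
    ∀ x ∈ Set.Ioo (0:ℝ) b, HasDerivAt (fun x : ℝ => Real.log (1+x) - Real.log (1-x))
      (1/(1+x) + 1/(1-x)) x := by
  intro x hx
  have h1 : (1:ℝ) + x ≠ 0 := by nlinarith [hx.1]
  have h2 : (1:ℝ) - x ≠ 0 := by nlinarith [hx.2, hb1]
  have d1 : HasDerivAt (fun y : ℝ => Real.log (1+y)) (1/(1+x)) x := by
    have hd : HasDerivAt (fun y : ℝ => 1+y) 1 x := (hasDerivAt_id x).const_add 1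
    simpa using hd.log h1
  have d2 : HasDerivAt (fun y : ℝ => Real.log (1-y)) (-(1/(1-x))) x := by
    have hd : HasDerivAt (fun y : ℝ => 1-y) (-1) x := (hasDerivAt_id x).const_sub 1
    simpa [neg_div] using hd.log h2
  exact (d1.sub d2).congr_deriv (by ring)

private lemma ratio_convex {b : ℝ} (hb0 : 0 < b) (hb1 : b < 1) :
    ConvexOn ℝ (Set.Icc 0 b) (fun x : ℝ => Real.log (1+x) - Real.log (1-x)) := by
  apply MonotoneOn.convexOn_of_deriv (convex_Icc 0 b)
  · apply ContinuousOn.sub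
    · apply ContinuousOn.log (by fun_prop)
      intro x hx
      have := hx.1; nlinarith
    · apply ContinuousOn.log (by fun_prop)
      intro x hx
      have := hx.2; nlinarith
  · rw [interior_Icc]
    intro x hx
    exact (ratio_deriv hb1 x hx).differentiableAt.differentiableWithinAt
  · rw [interior_Icc]
    intro x hx y hy hxy
    rw [(ratio_deriv hb1 x hx).deriv, (ratio_deriv hb1 y hy).deriv]
    have hx0 : 0 < x := hx.1
    have hx1 : x < 1 := lt_trans hx.2 hb1
    have hy1 : y < 1 := lt_trans hy.2 hb1
    have hy0 : 0 < y := hy.1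
    have hne1 : (1:ℝ) + x ≠ 0 := by nlinarith
    have hne2 : (1:ℝ) - x ≠ 0 := by nlinarith
    have hne3 : (1:ℝ) + y ≠ 0 := by nlinarith
    have hne4 : (1:ℝ) - y ≠ 0 := by nlinarith
    have e1 : 1/(1+x) + 1/(1-x) = 2/((1+x)*(1-x)) := by
      rw [div_add_div _ _ hne1 hne2]
      congr 1; ring
    have e2 : 1/(1+y) + 1/(1-y) = 2/((1+y)*(1-y)) := by
      rw [div_add_div _ _ hne3 hne4]
      congr 1; ring
    rw [e1, e2, div_le_div_iff₀ (by nlinarith) (by nlinarith)]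
    nlinarith [mul_nonneg (sub_nonneg.mpr hxy) (by linarith : (0:ℝ) ≤ y + x)]

private lemma ratio_mono {a b : ℝ} (ha : 0 < a) (hab : a ≤ b) (hb1 : b < 1) :
    Real.log ((1+a)/(1-a)) / a ≤ Real.log ((1+b)/(1-b)) / b := by
  have hb0 : 0 < b := lt_of_lt_of_le ha hab
  have ha1 : a < 1 := lt_of_le_of_lt hab hb1
  set f : ℝ → ℝ := fun x => Real.log (1+x) - Real.log (1-x) with hf
  have hconv : ConvexOn ℝ (Set.Icc 0 b) f := ratio_convex hb0 hb1
  have h0mem : (0:ℝ) ∈ Set.Icc (0:ℝ) b := by constructor <;> simp [hb0.le]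
  have hbmem : b ∈ Set.Icc (0:ℝ) b := by constructor <;> simp [hb0.le]
  have hw1 : (0:ℝ) ≤ 1 - a/b := by
    rw [sub_nonneg]
    exact (div_le_one hb0).mpr hab
  have hw2 : (0:ℝ) ≤ a/b := by positivity
  have hkey := hconv.2 h0mem hbmem hw1 hw2 (by ring)
  simp only [smul_eq_mul, mul_zero, zero_add] at hkey
  rw [div_mul_cancel₀ a hb0.ne'] at hkey
  have hf0 : f 0 = 0 := by simp [hf]
  rw [hf0, mul_zero, zero_add] at hkey
  have hLa : Real.log ((1+a)/(1-a)) = f a := by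
    rw [hf]; exact Real.log_div (by linarith) (by linarith)
  have hLb : Real.log ((1+b)/(1-b)) = f b := by
    rw [hf]; exact Real.log_div (by linarith) (by linarith)
  rw [hLa, hLb, div_le_div_iff₀ ha hb0]
  have h2 : f a * b ≤ a * f b :=
    calc f a * b ≤ (a/b * f b) * b := mul_le_mul_of_nonneg_right hkey hb0.le
    _ = a * f b := by field_simp
  linarith [h2]

set_option maxHeartbeats 2000000 in
theorem stmt_19 (lam p : ℝ) (hlam : 0 < lam) (hp : 0 < p)
    (hp' : p < (lam + 1) / (2 * lam ^ 2 + 2 * lam + 1))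
    (g h : ℝ)
    (hg : g = (lam + 3) * (2 * lam + 3 - 3 * lam * p - 3 * p - lam ^ 2 * p))
    (hh : h = lam * Real.sqrt (p * (lam + 1) * (p * lam ^ 2 + 4 * lam + 6 - 3 * p) * (lam + 3))) :
    ((lam * p + 1) * (2 * lam + 3) * (lam + 3) / (2 * h)) * Real.log ((g + h) / (g - h))
      ≤ ((lam * p + 1) / (lam * p)) * Real.sqrt (p * (lam + 1) / (4 + lam * p - 3 * p)) *
          Real.log
            (((2 - 2 * p - lam * p) * Real.sqrt (p * (lam + 1))
                + lam * p * Real.sqrt (4 + lam * p - 3 * p)) /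
              ((2 - 2 * p - lam * p) * Real.sqrt (p * (lam + 1))
                - lam * p * Real.sqrt (4 + lam * p - 3 * p))) := by
  have hden : (0:ℝ) < 2*lam^2 + 2*lam + 1 := by positivity
  rw [lt_div_iff₀ hden] at hp'
  have hcpos : 0 < (lam + 1 - p*(2*lam^2 + 2*lam + 1)) := by linarith
  have hl : (0:ℝ) ≤ lam := hlam.le
  have hl2 := pow_nonneg hl 2
  have hl3 := pow_nonneg hl 3
  have hl4 := pow_nonneg hl 4
  have hl5 := pow_nonneg hl 5
  have hl6 := pow_nonneg hl 6
  have hl7 := pow_nonneg hl 7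
  have hl8 := pow_nonneg hl 8
  have hp1 : p < 1 := by nlinarith [sq_nonneg lam]
  have hlp : 0 < lam*p := mul_pos hlam hp
  have hD4 : 0 < 4 + lam*p - 3*p := by nlinarith
  have hQ : 0 < p*lam^2 + 4*lam + 6 - 3*p := by nlinarith [mul_nonneg hp.le (sq_nonneg lam)]
  have hE : 0 < 2 - 2*p - lam*p := by
    have h1 : 0 < (2 - 2*p - lam*p) * (2*lam^2 + 2*lam + 1) := by
      nlinarith [mul_pos hcpos (show (0:ℝ) < lam + 2 by linarith), sq_nonneg lam]
    exact (mul_pos_iff_of_pos_right hden).mp h1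
  have hG2 : 0 < 2*lam + 3 - 3*lam*p - 3*p - lam^2*p := by
    have h1 : 0 < (2*lam + 3 - 3*lam*p - 3*p - lam^2*p) * (2*lam^2 + 2*lam + 1) := by
      nlinarith [mul_pos hcpos (show (0:ℝ) < lam^2 + 3*lam + 3 by positivity)]
    exact (mul_pos_iff_of_pos_right hden).mp h1
  have hgpos : 0 < g := by rw [hg]; exact mul_pos (by linarith) hG2
  have hPpos : 0 < p*(lam+1) := mul_pos hp (by linarith)
  have hWpos : 0 < p * (lam + 1) * (p * lam ^ 2 + 4 * lam + 6 - 3 * p) * (lam + 3) :=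
    mul_pos (mul_pos hPpos hQ) (by linarith)
  have hsWpos : 0 < Real.sqrt (p * (lam + 1) * (p * lam ^ 2 + 4 * lam + 6 - 3 * p) * (lam + 3)) :=
    Real.sqrt_pos.mpr hWpos
  have hhpos : 0 < h := by rw [hh]; exact mul_pos hlam hsWpos
  have hh2 : h^2 = lam^2 * (p * (lam + 1) * (p * lam ^ 2 + 4 * lam + 6 - 3 * p) * (lam + 3)) := by
    rw [hh, mul_pow, Real.sq_sqrt hWpos.le]
  -- h < g
  have hhg : h < g := by
    refine lt_of_pow_lt_pow_left₀ 2 hgpos.le ?_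
    rw [hh2, hg]
    have u0 : (0:ℝ) ≤ (lam+3) * (9*lam^2 + 57*lam^3 + 118*lam^4 + 92*lam^5 + 24*lam^6) := by
      apply mul_nonneg (by linarith); nlinarith
    have u1 : (0:ℝ) ≤ (lam + 1 - p*(2*lam^2 + 2*lam + 1)) * ((lam+3) * (36*lam + 156*lam^2 + 232*lam^3 + 180*lam^4 + 80*lam^5 + 16*lam^6)) := by
      apply mul_nonneg hcpos.le; apply mul_nonneg (by linarith); nlinarith
    have u2 : (0:ℝ) < (lam + 1 - p*(2*lam^2 + 2*lam + 1))^2 * ((lam+3) * (27 + 63*lam + 66*lam^2 + 36*lam^3 + 8*lam^4)) := by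
      apply mul_pos (pow_pos hcpos 2); apply mul_pos (by linarith); nlinarith
    have hposd : 0 < (((lam + 3) * (2 * lam + 3 - 3 * lam * p - 3 * p - lam ^ 2 * p))^2
        - lam^2 * (p * (lam + 1) * (p * lam ^ 2 + 4 * lam + 6 - 3 * p) * (lam + 3)))
        * (2*lam^2 + 2*lam + 1)^2 := by
      have key : (((lam + 3) * (2 * lam + 3 - 3 * lam * p - 3 * p - lam ^ 2 * p))^2
          - lam^2 * (p * (lam + 1) * (p * lam ^ 2 + 4 * lam + 6 - 3 * p) * (lam + 3)))
          * (2*lam^2 + 2*lam + 1)^2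
          = (lam+3) * (9*lam^2 + 57*lam^3 + 118*lam^4 + 92*lam^5 + 24*lam^6) + (lam + 1 - p*(2*lam^2 + 2*lam + 1)) * ((lam+3) * (36*lam + 156*lam^2 + 232*lam^3 + 180*lam^4 + 80*lam^5 + 16*lam^6)) + (lam + 1 - p*(2*lam^2 + 2*lam + 1))^2 * ((lam+3) * (27 + 63*lam + 66*lam^2 + 36*lam^3 + 8*lam^4)) := by
        ring
      rw [key]; linarith
    exact sub_pos.mp ((mul_pos_iff_of_pos_right (pow_pos hden 2)).mp hposd)
  set sP := Real.sqrt (p * (lam + 1)) with hsPdef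
  set sD := Real.sqrt (4 + lam * p - 3 * p) with hsDdef
  have hsP : 0 < sP := Real.sqrt_pos.mpr hPpos
  have hsD : 0 < sD := Real.sqrt_pos.mpr hD4
  have hsP2 : sP^2 = p*(lam+1) := Real.sq_sqrt hPpos.le
  have hsD2 : sD^2 = 4 + lam*p - 3*p := Real.sq_sqrt hD4.le
  set u : ℝ := (2 - 2*p - lam*p) * sP with hudef
  set v : ℝ := lam * p * sD with hvdef
  have hupos : 0 < u := mul_pos hE hsP
  have hvpos : 0 < v := mul_pos hlp hsD
  have hu2 : u^2 = (2 - 2*p - lam*p)^2 * (p*(lam+1)) := by rw [hudef, mul_pow, hsP2]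
  have hv2 : v^2 = (lam*p)^2 * (4 + lam*p - 3*p) := by rw [hvdef, mul_pow, hsD2]
  -- v < u
  have hvu : v < u := by
    refine lt_of_pow_lt_pow_left₀ 2 hupos.le ?_
    rw [hu2, hv2]
    have w1 : (0:ℝ) ≤ (lam + 1 - p*(2*lam^2 + 2*lam + 1)) * (4*lam + 16*lam^2 + 24*lam^3 + 16*lam^4) := by
      apply mul_nonneg hcpos.le; nlinarith
    have w2 : (0:ℝ) < (lam + 1 - p*(2*lam^2 + 2*lam + 1))^2 * (4 + 8*lam + 8*lam^2) := by
      apply mul_pos (pow_pos hcpos 2); nlinarith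
    have hposd : 0 < ((2 - 2*p - lam*p)^2 * (p*(lam+1)) - (lam*p)^2 * (4 + lam*p - 3*p))
        * (2*lam^2 + 2*lam + 1)^2 := by
      have key : ((2 - 2*p - lam*p)^2 * (p*(lam+1)) - (lam*p)^2 * (4 + lam*p - 3*p))
          * (2*lam^2 + 2*lam + 1)^2
          = p * ((lam + 1 - p*(2*lam^2 + 2*lam + 1)) * (4*lam + 16*lam^2 + 24*lam^3 + 16*lam^4)
                 + (lam + 1 - p*(2*lam^2 + 2*lam + 1))^2 * (4 + 8*lam + 8*lam^2)) := by
        ring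
      rw [key]
      exact mul_pos hp (by linarith)
    exact sub_pos.mp ((mul_pos_iff_of_pos_right (pow_pos hden 2)).mp hposd)
  -- h*u ≤ v*g
  have hhuvg : h*u ≤ v*g := by
    refine le_of_pow_le_pow_left₀ two_ne_zero (mul_pos hvpos hgpos).le ?_
    have e1 : (h*u)^2 = lam^2 * (p * (lam + 1) * (p * lam ^ 2 + 4 * lam + 6 - 3 * p) * (lam + 3))
        * ((2 - 2*p - lam*p)^2 * (p*(lam+1))) := by
      rw [show (h*u)^2 = h^2 * u^2 from by ring, hh2, hu2]
    have e2 : (v*g)^2 = (lam*p)^2 * (4 + lam*p - 3*p)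
        * ((lam + 3) * (2 * lam + 3 - 3 * lam * p - 3 * p - lam ^ 2 * p))^2 := by
      rw [show (v*g)^2 = v^2 * g^2 from by ring, hv2, hg]
    rw [e1, e2]
    have hsum : (0:ℝ) ≤ (9*lam^2 + 111*lam^3 + 541*lam^4 + 1313*lam^5 + 1638*lam^6 + 972*lam^7 + 216*lam^8) + (lam + 1 - p*(2*lam^2 + 2*lam + 1)) * (24*lam + 287*lam^2 + 1190*lam^3 + 2177*lam^4 + 1818*lam^5 + 688*lam^6 + 96*lam^7) + (lam + 1 - p*(2*lam^2 + 2*lam + 1))^2 * (15 + 233*lam + 771*lam^2 + 903*lam^3 + 478*lam^4 + 112*lam^5 + 8*lam^6) + (lam + 1 - p*(2*lam^2 + 2*lam + 1))^3 * (69 + 126*lam + 91*lam^2 + 30*lam^3 + 4*lam^4) := by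
      have t0 : (0:ℝ) ≤ (9*lam^2 + 111*lam^3 + 541*lam^4 + 1313*lam^5 + 1638*lam^6 + 972*lam^7 + 216*lam^8) := by linarith only [hl2, hl3, hl4, hl5, hl6, hl7, hl8]
      have t1 : (0:ℝ) ≤ (lam + 1 - p*(2*lam^2 + 2*lam + 1)) * (24*lam + 287*lam^2 + 1190*lam^3 + 2177*lam^4 + 1818*lam^5 + 688*lam^6 + 96*lam^7) := by apply mul_nonneg hcpos.le; linarith only [hl, hl2, hl3, hl4, hl5, hl6, hl7]
      have t2 : (0:ℝ) ≤ (lam + 1 - p*(2*lam^2 + 2*lam + 1))^2 * (15 + 233*lam + 771*lam^2 + 903*lam^3 + 478*lam^4 + 112*lam^5 + 8*lam^6) := by apply mul_nonneg (pow_nonneg hcpos.le 2); linarith only [hl, hl2, hl3, hl4, hl5, hl6]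
      have t3 : (0:ℝ) ≤ (lam + 1 - p*(2*lam^2 + 2*lam + 1))^3 * (69 + 126*lam + 91*lam^2 + 30*lam^3 + 4*lam^4) := by apply mul_nonneg (pow_nonneg hcpos.le 3); linarith only [hl, hl2, hl3, hl4]
      linarith only [t0, t1, t2, t3]
    have hfac : (0:ℝ) ≤ lam^2 * p^2 * (lam+3) := by
      have := mul_nonneg (sq_nonneg (lam*p)) (show (0:ℝ) ≤ lam+3 by linarith)
      linarith only [this]
    have hposd : 0 ≤ ((lam*p)^2 * (4 + lam*p - 3*p)
          * ((lam + 3) * (2 * lam + 3 - 3 * lam * p - 3 * p - lam ^ 2 * p))^2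
        - lam^2 * (p * (lam + 1) * (p * lam ^ 2 + 4 * lam + 6 - 3 * p) * (lam + 3))
          * ((2 - 2*p - lam*p)^2 * (p*(lam+1))))
        * (2*lam^2 + 2*lam + 1)^3 := by
      have key : ((lam*p)^2 * (4 + lam*p - 3*p)
            * ((lam + 3) * (2 * lam + 3 - 3 * lam * p - 3 * p - lam ^ 2 * p))^2
          - lam^2 * (p * (lam + 1) * (p * lam ^ 2 + 4 * lam + 6 - 3 * p) * (lam + 3))
            * ((2 - 2*p - lam*p)^2 * (p*(lam+1))))
          * (2*lam^2 + 2*lam + 1)^3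
          = lam^2 * p^2 * (lam+3)
            * ((9*lam^2 + 111*lam^3 + 541*lam^4 + 1313*lam^5 + 1638*lam^6 + 972*lam^7 + 216*lam^8) + (lam + 1 - p*(2*lam^2 + 2*lam + 1)) * (24*lam + 287*lam^2 + 1190*lam^3 + 2177*lam^4 + 1818*lam^5 + 688*lam^6 + 96*lam^7) + (lam + 1 - p*(2*lam^2 + 2*lam + 1))^2 * (15 + 233*lam + 771*lam^2 + 903*lam^3 + 478*lam^4 + 112*lam^5 + 8*lam^6) + (lam + 1 - p*(2*lam^2 + 2*lam + 1))^3 * (69 + 126*lam + 91*lam^2 + 30*lam^3 + 4*lam^4)) := by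
        ring
      rw [key]
      exact mul_nonneg hfac hsum
    exact sub_nonneg.mp ((mul_nonneg_iff_of_pos_right (pow_pos hden 3)).mp hposd)
  -- ratios
  have hgne : g ≠ 0 := hgpos.ne'
  have hhne : h ≠ 0 := hhpos.ne'
  have hghpos : 0 < g - h := by linarith
  have huvpos : 0 < u - v := by linarith
  have ht1pos : 0 < h/g := div_pos hhpos hgpos
  have ht1lt1 : h/g < 1 := (div_lt_one hgpos).mpr hhg
  have ht2lt1 : v/u < 1 := (div_lt_one hupos).mpr hvu
  have ht12 : h/g ≤ v/u := (div_le_div_iff₀ hgpos hupos).mpr (by linarith [hhuvg])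
  have hmono := ratio_mono ht1pos ht12 ht2lt1
  have h1t1 : (1:ℝ) - h/g ≠ 0 := by
    have : (0:ℝ) < 1 - h/g := by linarith
    exact this.ne'
  have h1t2 : (1:ℝ) - v/u ≠ 0 := by
    have : (0:ℝ) < 1 - v/u := by linarith
    exact this.ne'
  have earg1 : (g + h) / (g - h) = (1 + h/g) / (1 - h/g) := by
    rw [div_eq_div_iff hghpos.ne' h1t1]
    field_simp
  have earg2 : (u + v) / (u - v) = (1 + v/u) / (1 - v/u) := by
    rw [div_eq_div_iff huvpos.ne' h1t2]
    field_simp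
  have hsqdiv : Real.sqrt (p * (lam + 1) / (4 + lam * p - 3 * p)) = sP / sD := by
    rw [Real.sqrt_div hPpos.le, hsPdef, hsDdef]
  have hK12 : (lam*p + 1) * (2*lam + 3) * (lam + 3) / (2*g) ≤ (lam*p + 1) / (2 - 2*p - lam*p) := by
    rw [div_le_div_iff₀ (by linarith) hE, hg]
    have hx : (0:ℝ) ≤ (lam*p + 1) * (lam + 3) * (lam*p) :=
      mul_nonneg (mul_nonneg (by linarith) (by linarith)) hlp.le
    linarith only [hx]
  have hR1nn : 0 ≤ Real.log ((1 + h/g) / (1 - h/g)) / (h/g) := by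
    apply div_nonneg _ ht1pos.le
    apply Real.log_nonneg
    rw [le_div_iff₀ (by linarith)]
    linarith
  have elhs : ((lam * p + 1) * (2 * lam + 3) * (lam + 3) / (2 * h)) * Real.log ((g + h) / (g - h))
      = ((lam*p + 1) * (2*lam + 3) * (lam + 3) / (2*g))
        * (Real.log ((1 + h/g) / (1 - h/g)) / (h/g)) := by
    rw [earg1]
    field_simp
  have erhs : ((lam * p + 1) / (lam * p)) * Real.sqrt (p * (lam + 1) / (4 + lam * p - 3 * p)) *
          Real.log ((u + v) / (u - v))
      = ((lam*p + 1) / (2 - 2*p - lam*p)) * (Real.log ((1 + v/u) / (1 - v/u)) / (v/u)) := by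
    rw [earg2, hsqdiv, hudef, hvdef]
    rw [show lam * p * sD / ((2 - 2*p - lam*p) * sP) = (lam * p * sD) / ((2 - 2*p - lam*p) * sP)
      from rfl]
    field_simp [hE.ne', hsP.ne', hsD.ne', hlp.ne']
    have hE3 : (2 * (1 - p) - lam * p) ≠ 0 := by intro h0; linarith
    exact (mul_div_cancel_left₀ _ hE3).symm
  rw [elhs, erhs]
  exact mul_le_mul hK12 hmono hR1nn
    (div_nonneg (by linarith) hE.le)
end
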